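/- Let A, B be finite alphabets with #A ≥ 2 and let f : A* → B* be a Parikh-collinear morphism. For a word e = e_1⋯e_n of length n over B, define g_e : A^n → ℕ by g_e(a_1⋯a_n) = ∏_{i=1}^n C(f(a_i), e_i). Then for all words w, w' ∈ A^n that are abelian equivalent (w ∼_1 w'), one has g_e(w) = g_e(w'). -/

import Mathlib

/-- The number of occurrences of `w` as a (scattered) subword of `u`:
the binomial coefficient of the words `u` and `w`. -/
def wordBinom {A : Type*} [DecidableEq A] (u w : List A) : ℕ := u.sublists.count w

/-- `k`-binomial equivalence of finite words: all binomial coefficients with respect to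
words of length at most `k` agree. -/
def BinEquiv {A : Type*} [DecidableEq A] (k : ℕ) (u v : List A) : Prop :=
  ∀ x : List A, x.length ≤ k → wordBinom u x = wordBinom v x

/-- `k`-binomial equivalence as a setoid. -/
def binSetoid (A : Type*) [DecidableEq A] (k : ℕ) : Setoid (List A) where
  r := BinEquiv k
  iseqv := ⟨fun _ _ _ => rfl, fun h x hx => (h x hx).symm,
    fun h h' x hx => (h x hx).trans (h' x hx)⟩

/-- `u` occurs in the infinite word `x` at position `i`. -/
def OccursAt {A : Type*} (u : List A) (x : ℕ → A) (i : ℕ) : Prop :=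
  u = (List.range u.length).map (fun j => x (i + j))

/-- `u` is a factor of the infinite word `x`. -/
def FactorOf {A : Type*} (u : List A) (x : ℕ → A) : Prop := ∃ i, OccursAt u x i

/-- The set of length-`n` factors of `x`. -/
def Fac {A : Type*} (x : ℕ → A) (n : ℕ) : Set (List A) :=
  {u | u.length = n ∧ FactorOf u x}

/-- Factor complexity of an infinite word. -/
noncomputable def fc {A : Type*} (x : ℕ → A) (n : ℕ) : ℕ := (Fac x n).ncard

/-- `k`-binomial complexity of an infinite word: the number of `k`-binomial equivalence
classes of length-`n` factors. -/
noncomputable def bc {A : Type*} [DecidableEq A] (x : ℕ → A) (k n : ℕ) : ℕ :=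
  (Quotient.mk (binSetoid A k) '' Fac x n).ncard

/-- Application of a morphism (given by the images of letters) to a finite word. -/
def mAp {A B : Type*} (f : A → List B) (u : List A) : List B := (u.map f).flatten

/-- A morphism is Parikh-collinear if the Parikh vectors of images of letters are
pairwise rationally collinear. -/
def ParikhCollinear {A B : Type*} [DecidableEq B] (f : A → List B) : Prop :=
  ∀ a b : A, ∃ r : ℚ, ∀ c : B, ((f b).count c : ℚ) = r * ((f a).count c)


lemma count_nil_sublists {A : Type*} [DecidableEq A] (u : List A) :
    Multiset.count ([] : List A) ↑u.sublists = 1 := by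
  induction u with
  | nil => simp
  | cons b u ih =>
    rw [Multiset.coe_eq_coe.mpr (List.sublists_cons_perm_append b u), ← Multiset.coe_add,
      Multiset.count_add, ih]
    have : Multiset.count ([] : List A) ↑(u.sublists.map (b :: ·)) = 0 := by
      rw [Multiset.count_eq_zero]; simp
    rw [this]

lemma count_singleton_sublists {A : Type*} [DecidableEq A] (u : List A) (a : A) :
    Multiset.count [a] (↑u.sublists : Multiset (List A)) = u.count a := by
  induction u with
  | nil => simp
  | cons b u ih =>
    rw [Multiset.coe_eq_coe.mpr (List.sublists_cons_perm_append b u), ← Multiset.coe_add,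
      Multiset.count_add, ih, List.count_cons]
    congr 1
    by_cases hb : b = a
    · subst hb
      simp only [beq_self_eq_true, if_true]
      rw [← Multiset.map_coe, Multiset.count_map]
      have hfil : Multiset.filter (fun x => [b] = b :: x) (↑u.sublists : Multiset (List A))
          = Multiset.filter (fun x => ([] : List A) = x) ↑u.sublists :=
        Multiset.filter_congr (fun x _ => by simp [eq_comm])
      rw [hfil]
      have := count_nil_sublists u
      rwa [Multiset.count, Multiset.countP_eq_card_filter] at this
    · have h0 : Multiset.count [a] (↑(u.sublists.map (b :: ·)) : Multiset (List A)) = 0 := by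
        rw [Multiset.count_eq_zero]; simp [hb]
      simp [h0, hb]

lemma wordBinom_singleton {A : Type*} [DecidableEq A] (u : List A) (a : A) :
    wordBinom u [a] = u.count a := by
  have hB : (List.instBEq : BEq (List A)) = instBEqOfDecidableEq := lawful_beq_subsingleton _ _
  rw [wordBinom, hB, ← Multiset.coe_count [a] u.sublists]
  exact count_singleton_sublists u a

theorem parikhCollinear_g_constant_on_abelian_classes {A B : Type*}
    [Fintype A] [DecidableEq A] [Fintype B] [DecidableEq B]
    (hA : 2 ≤ Fintype.card A) (f : A → List B) (hf : ParikhCollinear f)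
    (e : List B) (w w' : List A)
    (hw : w.length = e.length) (hw' : w'.length = e.length)
    (h : BinEquiv 1 w w') :
    ((w.zip e).map (fun p => wordBinom (f p.1) [p.2])).prod
      = ((w'.zip e).map (fun p => wordBinom (f p.1) [p.2])).prod := by
  classical
  obtain ⟨a0⟩ : Nonempty A := Fintype.card_pos_iff.mp (by omega)
  choose r hr using fun b => hf a0 b
  have hperm : w.Perm w' := List.perm_iff_count.mpr fun a => by
    have := h [a] (by simp)
    rwa [wordBinom_singleton, wordBinom_singleton] at this
  -- reduce to ℚ
  have key : ∀ (v : List A), v.length = e.length →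
      (((v.zip e).map (fun p => wordBinom (f p.1) [p.2])).prod : ℚ)
        = ((v.map r).prod) * ((e.map (fun c => ((f a0).count c : ℚ))).prod) := by
    intro v hv
    rw [Nat.cast_list_prod, List.map_map]
    have h1 : ((v.zip e).map (fun p => ((wordBinom (f p.1) [p.2] : ℕ) : ℚ)))
        = (v.zip e).map (fun p => r p.1 * ((f a0).count p.2 : ℚ)) := by
      apply List.map_congr_left
      intro p _
      rw [wordBinom_singleton]
      exact hr p.1 p.2
    rw [show ((v.zip e).map (Nat.cast ∘ fun p => wordBinom (f p.1) [p.2]) : List ℚ)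
        = (v.zip e).map (fun p => ((wordBinom (f p.1) [p.2] : ℕ) : ℚ)) from rfl, h1,
      List.prod_map_mul]
    congr 1
    · rw [show ((v.zip e).map fun p => r p.1) = ((v.zip e).map Prod.fst).map r by
        rw [List.map_map]; rfl]
      rw [List.map_fst_zip (le_of_eq hv)]
    · rw [show ((v.zip e).map fun p => ((f a0).count p.2 : ℚ))
          = ((v.zip e).map Prod.snd).map (fun c => ((f a0).count c : ℚ)) by
        rw [List.map_map]; rfl]
      rw [List.map_snd_zip (le_of_eq hv.symm)]
  have hq : (((w.zip e).map (fun p => wordBinom (f p.1) [p.2])).prod : ℚ)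
      = (((w'.zip e).map (fun p => wordBinom (f p.1) [p.2])).prod : ℚ) := by
    rw [key w hw, key w' hw', (hperm.map r).prod_eq]
  exact_mod_cast hq
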